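/- If for some y the sequence Λ_p(y) converges to a finite limit L with L ≠ 0, then L · ∫₀¹ f(x) dx = 1; in particular the only possible finite positive limit of the sequence is (∫₀¹ f(x) dx)^{-1}. -/

import Mathlib

open Filter

/-- Riemann sums of a continuous function on `[0,1]` (right endpoints) converge
to the integral. -/
lemma riemann_sum_tendsto (f : ℝ → ℝ) (hf : ContinuousOn f (Set.Icc 0 1)) :
    Tendsto (fun n : ℕ => (n : ℝ)⁻¹ * ∑ q ∈ Finset.range n, f (((q : ℝ) + 1) / (n : ℝ)))
      atTop (nhds (∫ x in (0:ℝ)..1, f x)) := by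
  rw [Metric.tendsto_atTop]
  intro ε hε
  obtain ⟨δ, hδ, hδ'⟩ := Metric.uniformContinuousOn_iff.1
    (isCompact_Icc.uniformContinuousOn_of_continuous hf) (ε/2) (by positivity)
  obtain ⟨N, hN⟩ := exists_nat_gt (1/δ)
  refine ⟨max (N+1) 1, fun n hn => ?_⟩
  have hn1 : 1 ≤ n := le_trans (le_max_right _ _) hn
  have hnN : (1:ℝ)/δ < n := by
    calc (1:ℝ)/δ < N := hN
    _ ≤ n := by exact_mod_cast le_trans (le_trans (Nat.le_succ N) (le_max_left _ _)) hn
  have hnpos : (0:ℝ) < n := lt_trans (by positivity) hnN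
  have hinv : (1:ℝ)/n < δ := by
    rw [div_lt_iff₀ hnpos]
    rw [div_lt_iff₀ hδ] at hnN
    nlinarith
  set a : ℕ → ℝ := fun i => (i : ℝ) / n with ha
  have hsub : ∀ i : ℕ, i < n → Set.uIcc (a i) (a (i+1)) ⊆ Set.Icc 0 1 := by
    intro i hi
    have hle : a i ≤ a (i+1) := by
      apply (div_le_div_iff_of_pos_right hnpos).2
      push_cast; linarith
    rw [Set.uIcc_of_le hle]
    intro x hx
    constructor
    · exact le_trans (by positivity) hx.1
    · refine le_trans hx.2 ?_
      rw [div_le_one hnpos]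
      exact_mod_cast hi
  have hint : ∀ i : ℕ, i < n → IntervalIntegrable f MeasureTheory.volume (a i) (a (i+1)) :=
    fun i hi => (hf.mono (hsub i hi)).intervalIntegrable
  have hsplit : ∑ i ∈ Finset.range n, ∫ x in a i..a (i+1), f x = ∫ x in (0:ℝ)..1, f x := by
    rw [intervalIntegral.sum_integral_adjacent_intervals hint]
    congr 1
    · simp [ha]
    · simp [ha, hnpos.ne']
  have hlen : ∀ i : ℕ, a (i+1) - a i = 1 / n := by
    intro i
    simp only [ha]; push_cast; ring
  have key : (n : ℝ)⁻¹ * ∑ q ∈ Finset.range n, f (((q : ℝ) + 1) / (n : ℝ))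
      - ∫ x in (0:ℝ)..1, f x
      = ∑ i ∈ Finset.range n, ∫ x in a i..a (i+1), (f (((i : ℝ) + 1) / n) - f x) := by
    rw [Finset.mul_sum, ← hsplit, ← Finset.sum_sub_distrib]
    refine Finset.sum_congr rfl fun i hi => ?_
    rw [Finset.mem_range] at hi
    rw [intervalIntegral.integral_sub (intervalIntegrable_const) (hint i hi),
      intervalIntegral.integral_const, hlen i, smul_eq_mul]
    ring
  have hb : ∀ i ∈ Finset.range n, |∫ x in a i..a (i+1), (f (((i : ℝ) + 1) / n) - f x)|
      ≤ (ε/2) * (1/n) := by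
    intro i hi
    rw [Finset.mem_range] at hi
    have hle : a i ≤ a (i+1) := by
      apply (div_le_div_iff_of_pos_right hnpos).2
      push_cast; linarith
    have hcast : a (i+1) = ((i : ℝ) + 1) / n := by push_cast [ha]; ring
    have hcmem : ((i : ℝ) + 1) / n ∈ Set.Icc (0:ℝ) 1 := by
      apply hsub i hi
      rw [Set.uIcc_of_le hle, ← hcast]
      exact ⟨hle, le_refl _⟩
    have hbd : ∀ x ∈ Set.uIoc (a i) (a (i+1)), ‖f (((i : ℝ) + 1) / n) - f x‖ ≤ ε/2 := by
      intro x hx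
      rw [Set.uIoc_of_le hle] at hx
      have hxmem : x ∈ Set.Icc (0:ℝ) 1 := by
        apply hsub i hi
        rw [Set.uIcc_of_le hle]
        exact ⟨le_of_lt hx.1, hx.2⟩
      have h1x : (i : ℝ) / n < x := hx.1
      have h2x : x ≤ ((i : ℝ) + 1) / n := hcast ▸ hx.2
      have hdist : dist (((i : ℝ) + 1) / n) x < δ := by
        rw [Real.dist_eq, abs_of_nonneg (by linarith)]
        have h3 : ((i : ℝ) + 1) / n - (i : ℝ) / n = 1 / n := by field_simp; ring
        linarith [hinv]
      exact le_of_lt (hδ' _ hcmem _ hxmem hdist)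
    calc |∫ x in a i..a (i+1), (f (((i : ℝ) + 1) / n) - f x)|
        ≤ (ε/2) * |a (i+1) - a i| :=
          intervalIntegral.norm_integral_le_of_norm_le_const hbd
      _ = (ε/2) * (1/n) := by rw [hlen i, abs_of_pos (by positivity)]
  rw [Real.dist_eq, key]
  calc |∑ i ∈ Finset.range n, ∫ x in a i..a (i+1), (f (((i : ℝ) + 1) / n) - f x)|
      ≤ ∑ i ∈ Finset.range n, |∫ x in a i..a (i+1), (f (((i : ℝ) + 1) / n) - f x)| :=
        Finset.abs_sum_le_sum_abs _ _
    _ ≤ ∑ _i ∈ Finset.range n, (ε/2) * (1/n) := Finset.sum_le_sum hb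
    _ = n * ((ε/2) * (1/n)) := by rw [Finset.sum_const, Finset.card_range, nsmul_eq_mul]
    _ = ε/2 := by field_simp
    _ < ε := by linarith

/-- The modified Riemann sums appearing in the recurrence also converge
to the integral. -/
lemma riemann_sum_tendsto' (f : ℝ → ℝ) (hf : ContinuousOn f (Set.Icc 0 1)) :
    Tendsto (fun p : ℕ => (1 / (p : ℝ)) * ∑ q ∈ Finset.Icc 1 p, f ((q : ℝ) / ((p : ℝ) + 1)))
      atTop (nhds (∫ x in (0:ℝ)..1, f x)) := by
  set I := ∫ x in (0:ℝ)..1, f x with hI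
  set S : ℕ → ℝ := fun n => (n : ℝ)⁻¹ * ∑ q ∈ Finset.range n, f (((q : ℝ) + 1) / (n : ℝ))
    with hS
  have hS1 : Tendsto (fun p : ℕ => S (p+1)) atTop (nhds I) :=
    (riemann_sum_tendsto f hf).comp (tendsto_add_atTop_nat 1)
  have hinv : Tendsto (fun p : ℕ => (p : ℝ)⁻¹) atTop (nhds 0) :=
    tendsto_inv_atTop_nhds_zero_nat
  have hmain : Tendsto (fun p : ℕ => (1 + (p:ℝ)⁻¹) * S (p+1) - f 1 * (p:ℝ)⁻¹)
      atTop (nhds I) := by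
    have : Tendsto (fun p : ℕ => (1 + (p:ℝ)⁻¹) * S (p+1) - f 1 * (p:ℝ)⁻¹)
        atTop (nhds ((1 + 0) * I - f 1 * 0)) :=
      (((tendsto_const_nhds.add hinv).mul hS1).sub (tendsto_const_nhds.mul hinv))
    simpa using this
  refine hmain.congr' ?_
  filter_upwards [eventually_ge_atTop 1] with p hp
  have hppos : (0:ℝ) < p := by exact_mod_cast hp
  have hp1pos : (0:ℝ) < (p:ℝ) + 1 := by positivity
  have hsum : ∑ q ∈ Finset.range (p+1), f (((q : ℝ) + 1) / ((p:ℝ) + 1))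
      = (∑ q ∈ Finset.Icc 1 p, f ((q : ℝ) / ((p : ℝ) + 1))) + f 1 := by
    rw [Finset.sum_range_succ]
    congr 1
    · rw [show Finset.Icc 1 p = Finset.Ico 1 (p+1) by rw [Finset.Ico_add_one_right_eq_Icc],
        Finset.sum_Ico_eq_sum_range]
      simp only [Nat.add_sub_cancel]
      refine Finset.sum_congr rfl fun i _ => ?_
      congr 1
      push_cast
      ring
    · congr 1
      field_simp
  have hcast : ((p:ℝ) + 1) = ((p + 1 : ℕ) : ℝ) := by push_cast; ring
  have : S (p+1) = ((p:ℝ)+1)⁻¹ * ((∑ q ∈ Finset.Icc 1 p, f ((q : ℝ) / ((p : ℝ) + 1))) + f 1) := by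
    rw [hS]
    simp only
    rw [← hcast, hsum]
  rw [this]
  field_simp
  ring

open Filter

/-- `Λ` is the family of sequences defined by the quadratic recurrence
`Λ_1(y) = y`, `Λ_{p+1}(y) = (1/p) ∑_{q=1}^p f(q/(p+1)) Λ_q(y) Λ_{p+1-q}(y)` for `p ≥ 1`. -/
def IsLamSeq (f : ℝ → ℝ) (Λ : ℝ → ℕ → ℝ) : Prop :=
  (∀ y : ℝ, Λ y 1 = y) ∧
  ∀ y : ℝ, ∀ p : ℕ, 1 ≤ p →
    Λ y (p + 1) =
      (1 / (p : ℝ)) * ∑ q ∈ Finset.Icc 1 p,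
        f ((q : ℝ) / ((p : ℝ) + 1)) * Λ y q * Λ y (p + 1 - q)

theorem stmt2 (f : ℝ → ℝ) (hf : ContinuousOn f (Set.Icc 0 1))
    (Λ : ℝ → ℕ → ℝ) (hΛ : IsLamSeq f Λ) (y L : ℝ) (hL : L ≠ 0)
    (hlim : Tendsto (fun p => Λ y p) atTop (nhds L)) :
    L * (∫ x in (0:ℝ)..1, f x) = 1 ∧ L = (∫ x in (0:ℝ)..1, f x)⁻¹ := by
  set I := ∫ x in (0:ℝ)..1, f x with hI
  -- bound on f
  obtain ⟨M, hM⟩ := isCompact_Icc.exists_bound_of_continuousOn hf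
  have hM0 : 0 ≤ M := le_trans (norm_nonneg _) (hM 0 (by norm_num))
  -- bound on Λ
  have habs : Tendsto (fun p => |Λ y p|) atTop (nhds |L|) := hlim.abs
  obtain ⟨C0, hC0⟩ := habs.bddAbove_range
  set C := max C0 |L| with hC
  have hCb : ∀ q : ℕ, |Λ y q| ≤ C := fun q =>
    le_trans (hC0 ⟨q, rfl⟩) (le_max_left _ _)
  have hCL : |L| ≤ C := le_max_right _ _
  have hC0' : 0 ≤ C := le_trans (abs_nonneg _) hCL
  -- Cesàro: A p → 0
  have hzero : Tendsto (fun i : ℕ => |Λ y (i+1) - L|) atTop (nhds 0) := by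
    have : Tendsto (fun i : ℕ => Λ y (i+1) - L) atTop (nhds (L - L)) :=
      (hlim.comp (tendsto_add_atTop_nat 1)).sub tendsto_const_nhds
    simpa using this.abs
  have hA : Tendsto (fun p : ℕ => (p:ℝ)⁻¹ * ∑ i ∈ Finset.range p, |Λ y (i+1) - L|)
      atTop (nhds 0) := hzero.cesaro
  set A : ℕ → ℝ := fun p => (p:ℝ)⁻¹ * ∑ i ∈ Finset.range p, |Λ y (i+1) - L| with hAdef
  -- T p → I
  have hT := riemann_sum_tendsto' f hf
  set T : ℕ → ℝ := fun p => (1 / (p : ℝ)) * ∑ q ∈ Finset.Icc 1 p, f ((q : ℝ) / ((p : ℝ) + 1))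
    with hTdef
  -- R p
  set R : ℕ → ℝ := fun p => (1 / (p : ℝ)) * ∑ q ∈ Finset.Icc 1 p,
      f ((q : ℝ) / ((p : ℝ) + 1)) * Λ y q * Λ y (p + 1 - q) with hRdef
  -- sums over Icc 1 p rewritten
  have hIccRange : ∀ p : ℕ, ∑ q ∈ Finset.Icc 1 p, |Λ y q - L|
      = ∑ i ∈ Finset.range p, |Λ y (i+1) - L| := by
    intro p
    rw [show Finset.Icc 1 p = Finset.Ico 1 (p+1) by rw [Finset.Ico_add_one_right_eq_Icc],
      Finset.sum_Ico_eq_sum_range]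
    simp only [Nat.add_sub_cancel]
    exact Finset.sum_congr rfl fun i _ => by rw [Nat.add_comm 1 i]
  have hreflect : ∀ p : ℕ, ∑ q ∈ Finset.Icc 1 p, |Λ y (p + 1 - q) - L|
      = ∑ q ∈ Finset.Icc 1 p, |Λ y q - L| := by
    intro p
    refine Finset.sum_nbij' (fun q => p + 1 - q) (fun q => p + 1 - q) ?_ ?_ ?_ ?_ ?_
    · intro q hq
      simp only [Finset.mem_Icc] at hq ⊢
      omega
    · intro q hq
      simp only [Finset.mem_Icc] at hq ⊢
      omega
    · intro q hq
      simp only [Finset.mem_Icc] at hq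
      show p + 1 - (p + 1 - q) = q
      omega
    · intro q hq
      simp only [Finset.mem_Icc] at hq
      show p + 1 - (p + 1 - q) = q
      omega
    · intro q hq
      rfl
  -- key bound
  have hbound : ∀ p : ℕ, |R p - L^2 * T p| ≤ 2 * M * C * A p := by
    intro p
    by_cases hp : p = 0
    · subst hp
      simp [hRdef, hTdef, hAdef]
    have hppos : (0:ℝ) < p := by exact_mod_cast Nat.pos_of_ne_zero hp
    have h1 : R p - L^2 * T p = ∑ q ∈ Finset.Icc 1 p,
        (1/(p:ℝ)) * (f ((q:ℝ)/((p:ℝ)+1)) * (Λ y q * Λ y (p+1-q) - L^2)) := by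
      simp only [hRdef, hTdef, Finset.mul_sum]
      rw [← Finset.sum_sub_distrib]
      exact Finset.sum_congr rfl fun q hq => by ring
    have hterm : ∀ q ∈ Finset.Icc 1 p,
        |(1/(p:ℝ)) * (f ((q:ℝ)/((p:ℝ)+1)) * (Λ y q * Λ y (p+1-q) - L^2))|
          ≤ (1/(p:ℝ)) * M * C * |Λ y q - L| + (1/(p:ℝ)) * M * C * |Λ y (p+1-q) - L| := by
      intro q hq
      rw [Finset.mem_Icc] at hq
      have hmemq : (q:ℝ)/((p:ℝ)+1) ∈ Set.Icc (0:ℝ) 1 := by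
        constructor
        · positivity
        · rw [div_le_one (by positivity)]
          have : (q:ℝ) ≤ p := by exact_mod_cast hq.2
          linarith
      have hfb : |f ((q:ℝ)/((p:ℝ)+1))| ≤ M := hM _ hmemq
      have e : Λ y q * Λ y (p+1-q) - L^2
          = (Λ y q - L) * Λ y (p+1-q) + L * (Λ y (p+1-q) - L) := by ring
      have hquad : |Λ y q * Λ y (p+1-q) - L^2|
          ≤ C * |Λ y q - L| + C * |Λ y (p+1-q) - L| := by
        rw [e]
        refine le_trans (abs_add_le _ _) ?_
        rw [abs_mul, abs_mul]
        have t1 : |Λ y q - L| * |Λ y (p+1-q)| ≤ |Λ y q - L| * C :=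
          mul_le_mul_of_nonneg_left (hCb _) (abs_nonneg _)
        have t2 : |L| * |Λ y (p+1-q) - L| ≤ C * |Λ y (p+1-q) - L| :=
          mul_le_mul_of_nonneg_right hCL (abs_nonneg _)
        have t3 : |Λ y q - L| * C = C * |Λ y q - L| := mul_comm _ _
        linarith
      calc |(1/(p:ℝ)) * (f ((q:ℝ)/((p:ℝ)+1)) * (Λ y q * Λ y (p+1-q) - L^2))|
          = (1/(p:ℝ)) * (|f ((q:ℝ)/((p:ℝ)+1))| * |Λ y q * Λ y (p+1-q) - L^2|) := by
            rw [abs_mul, abs_mul, abs_of_pos (by positivity : (0:ℝ) < 1/(p:ℝ))]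
        _ ≤ (1/(p:ℝ)) * (M * (C * |Λ y q - L| + C * |Λ y (p+1-q) - L|)) := by
            apply mul_le_mul_of_nonneg_left ?_ (by positivity)
            exact mul_le_mul hfb hquad (abs_nonneg _) hM0
        _ = (1/(p:ℝ)) * M * C * |Λ y q - L| + (1/(p:ℝ)) * M * C * |Λ y (p+1-q) - L| := by
            ring
    calc |R p - L^2 * T p|
        ≤ ∑ q ∈ Finset.Icc 1 p,
            |(1/(p:ℝ)) * (f ((q:ℝ)/((p:ℝ)+1)) * (Λ y q * Λ y (p+1-q) - L^2))| := by
          rw [h1]; exact Finset.abs_sum_le_sum_abs _ _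
      _ ≤ ∑ q ∈ Finset.Icc 1 p, ((1/(p:ℝ)) * M * C * |Λ y q - L|
            + (1/(p:ℝ)) * M * C * |Λ y (p+1-q) - L|) := Finset.sum_le_sum hterm
      _ = (1/(p:ℝ)) * M * C * (∑ q ∈ Finset.Icc 1 p, |Λ y q - L|)
            + (1/(p:ℝ)) * M * C * (∑ q ∈ Finset.Icc 1 p, |Λ y (p+1-q) - L|) := by
          rw [Finset.sum_add_distrib, Finset.mul_sum, Finset.mul_sum]
      _ = 2 * M * C * A p := by
          rw [hreflect p, hIccRange p]
          simp only [hAdef, one_div]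
          ring
  -- limit of R
  have hR0 : Tendsto (fun p => R p - L^2 * T p) atTop (nhds 0) := by
    apply squeeze_zero_norm (fun p => by
      simpa [Real.norm_eq_abs] using hbound p)
    simpa using hA.const_mul (2 * M * C)
  have hRlim : Tendsto R atTop (nhds (L^2 * I)) := by
    have h2 := hR0.add (hT.const_mul (L^2))
    simp only [zero_add] at h2
    refine h2.congr fun p => by ring
  have hLam : Tendsto (fun p : ℕ => Λ y (p+1)) atTop (nhds L) :=
    hlim.comp (tendsto_add_atTop_nat 1)
  have heq : ∀ᶠ p : ℕ in atTop, R p = Λ y (p+1) := by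
    filter_upwards [eventually_ge_atTop 1] with p hp
    exact (hΛ.2 y p hp).symm
  have hkey : L = L^2 * I :=
    tendsto_nhds_unique hLam (hRlim.congr' heq)
  have hLI : L * I = 1 := by
    apply mul_left_cancel₀ hL
    rw [mul_one, ← mul_assoc]
    linear_combination -hkey
  refine ⟨hLI, ?_⟩
  have hI0 : I ≠ 0 := by
    intro h
    rw [h, mul_zero] at hLI
    norm_num at hLI
  field_simp
  linarith [hLI]
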